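/- Suppose z_1 < z_2 < ... < z_n are real numbers. For each u ∈ ℝ^n, let C(u) ∈ ℝ^{n×n} be the cost matrix with entries C_{ij} = (z_i − u_j)^2, and let 𝒫(u) be the set of minimizers of P ↦ Σ_{i,j} C_{ij} P_{ij} over the scaled Birkhoff polytope B(n,n). Then the set { ŷ ∈ ℝ^n : ŷ = n P u for some u ∈ ℝ^n and some P ∈ 𝒫(u) } is exactly the set { v ∈ ℝ^n : v_1 ≤ v_2 ≤ ... ≤ v_n } of nondecreasing sequences. -/

import Mathlib

/-- The scaled Birkhoff polytope `B(n,k)`: nonnegative matrices whose rows sum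
to `1/n` and whose columns sum to `1/k`. -/
def scaledBirkhoff (n k : ℕ) : Set (Matrix (Fin n) (Fin k) ℝ) :=
  {P | (∀ i j, 0 ≤ P i j) ∧ (∀ i, ∑ j, P i j = 1 / n) ∧ (∀ j, ∑ i, P i j = 1 / k)}

/-- The transport cost `Σ_{i,j} C_{ij} P_{ij}` with `C_{ij} = (z_i − u_j)^2`. -/
def transportCost {n k : ℕ} (z : Fin n → ℝ) (u : Fin k → ℝ)
    (P : Matrix (Fin n) (Fin k) ℝ) : ℝ :=
  ∑ i, ∑ j, (z i - u j) ^ 2 * P i j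

open Finset in
/-- Rearrangement-type bound for scaled Birkhoff matrices. -/
lemma birkhoff_sum_mul_le (n : ℕ) (hn : 0 < n) (z v : Fin n → ℝ)
    (hz : Monotone z) (hv : Monotone v) {Q : Matrix (Fin n) (Fin n) ℝ}
    (hQ : Q ∈ scaledBirkhoff n n) :
    ∑ i, ∑ j, z i * v j * Q i j ≤ (1 / n) * ∑ i, z i * v i := by
  obtain ⟨hQnn, hQrow, hQcol⟩ := hQ
  have hn' : (0:ℝ) < n := by exact_mod_cast hn
  set M : Matrix (Fin n) (Fin n) ℝ := fun i j => (n : ℝ) * Q i j with hM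
  have hMds : M ∈ doublyStochastic ℝ (Fin n) := by
    rw [mem_doublyStochastic_iff_sum]
    refine ⟨fun i j => mul_nonneg hn'.le (hQnn i j), fun i => ?_, fun j => ?_⟩
    · rw [← Finset.mul_sum, hQrow]; field_simp
    · rw [← Finset.mul_sum, hQcol]; field_simp
  -- the half-space
  set T : Set (Matrix (Fin n) (Fin n) ℝ) :=
    {A | ∑ i, ∑ j, z i * v j * A i j ≤ ∑ i, z i * v i} with hT
  have hlin : IsLinearMap ℝ (fun A : Matrix (Fin n) (Fin n) ℝ => ∑ i, ∑ j, z i * v j * A i j) := by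
    constructor
    · intro A B
      simp [Matrix.add_apply, mul_add, Finset.sum_add_distrib]
    · intro c A
      simp [Matrix.smul_apply, Finset.mul_sum, smul_eq_mul]
      congr 1; ext i; congr 1; ext j; ring
  have hTconv : Convex ℝ T := convex_halfSpace_le hlin _
  have hperm : {σ.permMatrix ℝ | σ : Equiv.Perm (Fin n)} ⊆ T := by
    rintro A ⟨σ, rfl⟩
    have hentry : ∀ i j, (σ.permMatrix ℝ) i j = if σ i = j then (1:ℝ) else 0 := by
      intro i j
      rw [show (σ.permMatrix ℝ) i j = (1 : Matrix (Fin n) (Fin n) ℝ) (σ i) j from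
        congrFun (congrFun (PEquiv.toMatrix_toPEquiv_eq σ) i) j, Matrix.one_apply]
    have : ∑ i, ∑ j, z i * v j * (σ.permMatrix ℝ) i j = ∑ i, z i * v (σ i) := by
      refine Finset.sum_congr rfl fun i _ => ?_
      rw [Finset.sum_eq_single (σ i)]
      · rw [hentry, if_pos rfl, mul_one]
      · intro b _ hb
        rw [hentry, if_neg (Ne.symm hb), mul_zero]
      · intro h; exact absurd (Finset.mem_univ _) h
    rw [hT, Set.mem_setOf_eq, this]
    exact (hz.monovary hv).sum_mul_comp_perm_le_sum_mul
  have hMT : M ∈ T := by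
    have := doublyStochastic_eq_convexHull_permMatrix (R := ℝ) (n := Fin n)
    have hsub : (doublyStochastic ℝ (Fin n) : Set (Matrix (Fin n) (Fin n) ℝ)) ⊆ T := by
      rw [this]; exact convexHull_min hperm hTconv
    exact hsub hMds
  rw [hT, Set.mem_setOf_eq] at hMT
  have hexp : ∑ i, ∑ j, z i * v j * M i j = (n:ℝ) * ∑ i, ∑ j, z i * v j * Q i j := by
    rw [Finset.mul_sum]
    refine Finset.sum_congr rfl fun i _ => ?_
    rw [Finset.mul_sum]
    refine Finset.sum_congr rfl fun j _ => ?_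
    rw [hM]; ring
  rw [hexp] at hMT
  rw [div_mul_eq_mul_div, one_mul, le_div_iff₀ hn']
  linarith [hMT]

open Finset in
/-- Cost expansion using the marginals. -/
lemma transportCost_eq (n : ℕ) (hn : 0 < n) (z u : Fin n → ℝ)
    {Q : Matrix (Fin n) (Fin n) ℝ} (hQ : Q ∈ scaledBirkhoff n n) :
    transportCost z u Q =
      (1 / n) * ∑ i, z i ^ 2 + (1 / n) * ∑ j, u j ^ 2
        - 2 * ∑ i, ∑ j, z i * u j * Q i j := by
  obtain ⟨hQnn, hQrow, hQcol⟩ := hQ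
  have h1 : transportCost z u Q =
      ∑ i, ∑ j, (z i ^ 2 * Q i j + u j ^ 2 * Q i j - 2 * (z i * u j * Q i j)) := by
    unfold transportCost
    refine Finset.sum_congr rfl fun i _ => Finset.sum_congr rfl fun j _ => by ring
  rw [h1]
  have h2 : ∀ i : Fin n, ∑ j, (z i ^ 2 * Q i j + u j ^ 2 * Q i j - 2 * (z i * u j * Q i j))
      = ∑ j, z i ^ 2 * Q i j + ∑ j, u j ^ 2 * Q i j - ∑ j, 2 * (z i * u j * Q i j) := by
    intro i; rw [Finset.sum_sub_distrib, Finset.sum_add_distrib]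
  simp only [h2]
  rw [Finset.sum_sub_distrib, Finset.sum_add_distrib]
  have hA : ∑ i, ∑ j, z i ^ 2 * Q i j = (1 / n) * ∑ i, z i ^ 2 := by
    rw [Finset.mul_sum]
    refine Finset.sum_congr rfl fun i _ => ?_
    rw [← Finset.mul_sum, hQrow]; ring
  have hB : ∑ i : Fin n, ∑ j, u j ^ 2 * Q i j = (1 / n) * ∑ j, u j ^ 2 := by
    rw [Finset.sum_comm, Finset.mul_sum]
    refine Finset.sum_congr rfl fun j _ => ?_
    rw [← Finset.mul_sum, hQcol]; ring
  have hC : ∑ i, ∑ j, 2 * (z i * u j * Q i j) = 2 * ∑ i, ∑ j, z i * u j * Q i j := by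
    rw [Finset.mul_sum]
    refine Finset.sum_congr rfl fun i _ => ?_
    rw [Finset.mul_sum]
  rw [hA, hB, hC]

theorem brenierIR_1d_characterization (n : ℕ) (hn : 0 < n)
    (z : Fin n → ℝ) (hz : StrictMono z) :
    {yhat : Fin n → ℝ |
      ∃ (u : Fin n → ℝ) (P : Matrix (Fin n) (Fin n) ℝ),
        P ∈ scaledBirkhoff n n ∧
        (∀ Q ∈ scaledBirkhoff n n, transportCost z u P ≤ transportCost z u Q) ∧
        yhat = fun i => (n : ℝ) * ∑ j, P i j * u j} =
    {v : Fin n → ℝ | Monotone v} := by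
  have hn' : (0:ℝ) < n := by exact_mod_cast hn
  ext yhat
  simp only [Set.mem_setOf_eq]
  constructor
  · rintro ⟨u, P, hPmem, hopt, rfl⟩
    obtain ⟨hPnn, hProw, hPcol⟩ := hPmem
    intro a b hab
    rcases eq_or_lt_of_le hab with rfl | hlt
    · exact le_rfl
    simp only
    -- the swapped matrix
    set Q : Matrix (Fin n) (Fin n) ℝ := fun r c => P (Equiv.swap a b r) c with hQdef
    have hQmem : Q ∈ scaledBirkhoff n n := by
      refine ⟨fun i j => hPnn _ _, fun i => hProw _, fun j => ?_⟩
      show ∑ r, P (Equiv.swap a b r) j = 1 / n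
      rw [Fintype.sum_equiv (Equiv.swap a b) (fun r => P (Equiv.swap a b r) j)
        (fun r => P r j) (fun r => rfl)]
      exact hPcol j
    have hcost := hopt Q hQmem
    set A : ℝ := ∑ c, u c * P a c with hA
    set B : ℝ := ∑ c, u c * P b c with hB
    have hkey : transportCost z u Q - transportCost z u P = 2 * (z b - z a) * (B - A) := by
      have hdiff : transportCost z u Q - transportCost z u P
          = ∑ r, (∑ c, (z r - u c) ^ 2 * Q r c - ∑ c, (z r - u c) ^ 2 * P r c) := by
        unfold transportCost
        rw [Finset.sum_sub_distrib]
      rw [hdiff]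
      have hzero : ∀ r ∈ (Finset.univ : Finset (Fin n)), r ∉ ({a, b} : Finset (Fin n)) →
          (∑ c, (z r - u c) ^ 2 * Q r c - ∑ c, (z r - u c) ^ 2 * P r c) = 0 := by
        intro r _ hr
        simp only [Finset.mem_insert, Finset.mem_singleton, not_or] at hr
        have : Equiv.swap a b r = r := Equiv.swap_apply_of_ne_of_ne hr.1 hr.2
        simp [hQdef, this]
      have hpair : ∑ r, (∑ c, (z r - u c) ^ 2 * Q r c - ∑ c, (z r - u c) ^ 2 * P r c)
          = ∑ r ∈ ({a, b} : Finset (Fin n)),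
            (∑ c, (z r - u c) ^ 2 * Q r c - ∑ c, (z r - u c) ^ 2 * P r c) :=
        (Finset.sum_subset (Finset.subset_univ _) hzero).symm
      rw [hpair, Finset.sum_pair (ne_of_lt hlt)]
      have hQa : ∀ c, Q a c = P b c := fun c => by simp [hQdef, Equiv.swap_apply_left]
      have hQb : ∀ c, Q b c = P a c := fun c => by simp [hQdef, Equiv.swap_apply_right]
      simp only [hQa, hQb]
      have e : ∀ r s : Fin n, ∑ c, (z r - u c) ^ 2 * P s c
          = z r ^ 2 * (1 / n) - 2 * z r * (∑ c, u c * P s c) + ∑ c, u c ^ 2 * P s c := by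
        intro r s
        have hterm : ∀ c : Fin n, (z r - u c) ^ 2 * P s c
            = z r ^ 2 * P s c - 2 * z r * (u c * P s c) + u c ^ 2 * P s c := fun c => by ring
        simp only [hterm]
        rw [Finset.sum_add_distrib, Finset.sum_sub_distrib, ← Finset.mul_sum, ← Finset.mul_sum,
          hProw s]
      rw [e a b, e a a, e b a, e b b, ← hA, ← hB]
      ring
    have hAB : A ≤ B := by
      have hzab : z a < z b := hz hlt
      nlinarith [hcost, hkey]
    have h1 : ∑ j, P a j * u j = A := Finset.sum_congr rfl fun j _ => mul_comm _ _
    have h2 : ∑ j, P b j * u j = B := Finset.sum_congr rfl fun j _ => mul_comm _ _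
    rw [h1, h2]
    exact mul_le_mul_of_nonneg_left hAB hn'.le
  · intro hv
    refine ⟨yhat, fun i j => if i = j then 1 / n else 0, ⟨?_, ?_, ?_⟩, ?_, ?_⟩
    · intro i j
      show (0:ℝ) ≤ if i = j then 1 / (n:ℝ) else 0
      split <;> positivity
    · intro i; simp
    · intro j; simp
    · intro Q hQ
      have hPmem : (fun i j => if i = j then (1:ℝ) / n else 0) ∈ scaledBirkhoff n n := by
        refine ⟨fun i j => ?_, fun i => by simp, fun j => by simp⟩
        show (0:ℝ) ≤ if i = j then 1 / (n:ℝ) else 0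
        split <;> positivity
      rw [transportCost_eq n hn z yhat hPmem, transportCost_eq n hn z yhat hQ]
      have hPsum : ∑ i, ∑ j, z i * yhat j * (if i = j then (1:ℝ)/n else 0)
          = (1 / n) * ∑ i, z i * yhat i := by
        rw [Finset.mul_sum]
        refine Finset.sum_congr rfl fun i _ => ?_
        rw [Finset.sum_eq_single i]
        · simp; ring
        · intro b _ hb; simp [Ne.symm hb]
        · simp
      rw [hPsum]
      have := birkhoff_sum_mul_le n hn z yhat hz.monotone hv hQ
      linarith
    · funext i
      simp only
      rw [Finset.sum_eq_single i]
      · simp; field_simp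
      · intro b _ hb; simp [Ne.symm hb]
      · simp
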